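/- Let n ≥ 1 and let k, k' ∈ P^{++}, i.e., k = (k_1,…,k_n) and k' = (k'_1,…,k'_n) are integer vectors with k_1 > k_2 > … > k_n ≥ 0 and k'_1 > k'_2 > … > k'_n ≥ 0. Then ∫_{F(S̃_n^aff)} cos⁻_{k+ρ}(x) cos⁻_{k'+ρ}(x) dx = 2^{−n} · δ_{k,k'}, where ρ = (1/2,…,1/2) and dx is n-dimensional Lebesgue measure. -/

import Mathlib

open Real Finset MeasureTheory

/-- The antisymmetric multivariate cosine function
`cos⁻_λ(x) = Σ_{σ ∈ S_n} sgn(σ) ∏_{i=1}^n cos(π λ_{σ(i)} x_i)`. -/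
noncomputable def cosMinus (n : ℕ) (lam x : Fin n → ℝ) : ℝ :=
  ∑ σ : Equiv.Perm (Fin n),
    ((Equiv.Perm.sign σ : ℤ) : ℝ) * ∏ i : Fin n, Real.cos (Real.pi * lam (σ i) * x i)

/-- The fundamental domain `F(S̃_n^aff) = {x ∈ ℝ^n : 1 ≥ x_1 ≥ x_2 ≥ … ≥ x_n ≥ 0}`. -/
def Fdom (n : ℕ) : Set (Fin n → ℝ) :=
  {x | (∀ i j : Fin n, i ≤ j → x j ≤ x i) ∧ ∀ i : Fin n, 0 ≤ x i ∧ x i ≤ 1}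

namespace OrthoAux

/-! ### One-dimensional computations -/

lemma intCos (c : ℝ) (hc : c ≠ 0) : ∫ t in (0:ℝ)..1, Real.cos (c * t) = Real.sin c / c := by
  rw [intervalIntegral.integral_comp_mul_left Real.cos hc]
  simp [integral_cos, smul_eq_mul]
  ring

lemma oneDim (a b : ℕ) :
    ∫ t in Set.Icc (0:ℝ) 1,
        Real.cos (π * ((a:ℝ)+1/2) * t) * Real.cos (π * ((b:ℝ)+1/2) * t)
      = if a = b then (2:ℝ)⁻¹ else 0 := by
  have h2 : ∀ t:ℝ, Real.cos (π*((a:ℝ)+1/2)*t) * Real.cos (π*((b:ℝ)+1/2)*t)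
      = (Real.cos ((π*((a:ℝ)-(b:ℝ)))*t) + Real.cos ((π*((a:ℝ)+(b:ℝ)+1))*t))/2 := by
    intro t
    have h := Real.two_mul_cos_mul_cos (π*((a:ℝ)+1/2)*t) (π*((b:ℝ)+1/2)*t)
    have hx : π*((a:ℝ)+1/2)*t - π*((b:ℝ)+1/2)*t = (π*((a:ℝ)-(b:ℝ)))*t := by ring
    have hy : π*((a:ℝ)+1/2)*t + π*((b:ℝ)+1/2)*t = (π*((a:ℝ)+(b:ℝ)+1))*t := by ring
    rw [hx, hy] at h
    linarith [h]
  have hInt : ∀ c : ℝ, IntervalIntegrable (fun t => Real.cos (c * t)) volume 0 1 :=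
    fun c => (Real.continuous_cos.comp (continuous_const.mul continuous_id)).intervalIntegrable 0 1
  rw [MeasureTheory.integral_Icc_eq_integral_Ioc,
    ← intervalIntegral.integral_of_le (by norm_num : (0:ℝ) ≤ 1)]
  rw [intervalIntegral.integral_congr (g := fun t =>
      (Real.cos ((π*((a:ℝ)-(b:ℝ)))*t) + Real.cos ((π*((a:ℝ)+(b:ℝ)+1))*t))/2)
      (fun t _ => h2 t)]
  rw [intervalIntegral.integral_div, intervalIntegral.integral_add (hInt _) (hInt _)]
  have hsum : ∫ t in (0:ℝ)..1, Real.cos ((π*((a:ℝ)+(b:ℝ)+1))*t) = 0 := by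
    have hc : π*((a:ℝ)+(b:ℝ)+1) ≠ 0 := by positivity
    rw [intCos _ hc]
    have : Real.sin (π*((a:ℝ)+(b:ℝ)+1)) = 0 := by
      have := Real.sin_nat_mul_pi (a+b+1)
      push_cast at this ⊢
      rw [show π*((a:ℝ)+(b:ℝ)+1) = ((a:ℝ)+(b:ℝ)+1)*π by ring]
      exact this
    rw [this, zero_div]
  rw [hsum]
  by_cases hab : a = b
  · subst hab
    simp only [sub_self, mul_zero, zero_mul, Real.cos_zero, if_pos rfl]
    norm_num
  · have hc : π*((a:ℝ)-(b:ℝ)) ≠ 0 := by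
      have : (a:ℝ) - (b:ℝ) ≠ 0 := by
        intro h; apply hab
        have : (a:ℝ) = b := by linarith
        exact_mod_cast this
      positivity
    rw [if_neg hab, intCos _ hc]
    have : Real.sin (π*((a:ℝ)-(b:ℝ))) = 0 := by
      have := Real.sin_int_mul_pi ((a:ℤ) - b)
      push_cast at this
      rw [show π*((a:ℝ)-(b:ℝ)) = ((a:ℝ)-(b:ℝ))*π by ring]
      exact this
    rw [this, zero_div]
    norm_num

/-! ### Combinatorial lemmas -/

lemma sortUnique {n : ℕ} {k k' : Fin n → ℕ} (hk : StrictAnti k) (hk' : StrictAnti k')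
    {σ τ : Equiv.Perm (Fin n)} (h : ∀ i, k (σ i) = k' (τ i)) : σ = τ ∧ k = k' := by
  have hg : StrictMono (fun i => σ (τ.symm i)) := by
    intro i j hij
    have h1 : k (σ (τ.symm i)) = k' i := by simpa using h (τ.symm i)
    have h2 : k (σ (τ.symm j)) = k' j := by simpa using h (τ.symm j)
    have hlt : k (σ (τ.symm j)) < k (σ (τ.symm i)) := by rw [h1, h2]; exact hk' hij
    exact hk.lt_iff_gt.mp hlt
  have hid : (fun i => σ (τ.symm i)) = (id : Fin n → Fin n) := by
    refine (@StrictMono.range_inj (Fin n) (Fin n) _ _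
      (inferInstance : WellFoundedLT (Fin n)) _ id hg strictMono_id).mp ?_
    rw [Set.range_id, Set.range_eq_univ]
    exact σ.surjective.comp τ.symm.surjective
  have hστ : σ = τ := by
    refine Equiv.ext fun j => ?_
    have := congrFun hid (τ j)
    simpa using this
  subst hστ
  refine ⟨rfl, funext fun j => ?_⟩
  have := h (σ.symm j)
  simpa using this

lemma strictAnti_comp_unique {n : ℕ} {x : Fin n → ℝ} (hx : Function.Injective x)
    {σ τ : Equiv.Perm (Fin n)} (hσ : StrictAnti (x ∘ σ)) (hτ : StrictAnti (x ∘ τ)) :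
    σ = τ := by
  have hr : Set.range (x ∘ σ) = Set.range (x ∘ τ) := by
    rw [Set.range_comp, Set.range_comp, Set.range_eq_univ.mpr σ.surjective,
      Set.range_eq_univ.mpr τ.surjective]
  have h2 := (@StrictAnti.range_inj (Fin n) ℝ _ _
    (inferInstance : WellFoundedGT (Fin n)) _ _ hσ hτ).mp hr
  exact Equiv.ext fun i => hx (congrFun h2 i)

/-! ### Properties of `cosMinus` -/

lemma cosMinus_continuous (n : ℕ) (lam : Fin n → ℝ) : Continuous (cosMinus n lam) := by
  unfold cosMinus
  refine continuous_finset_sum _ fun σ _ => Continuous.mul continuous_const ?_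
  refine continuous_finset_prod _ fun i _ => ?_
  exact Real.continuous_cos.comp (continuous_const.mul (continuous_apply i))

lemma cosMinus_perm (n : ℕ) (lam x : Fin n → ℝ) (σ : Equiv.Perm (Fin n)) :
    cosMinus n lam (x ∘ σ) = ((Equiv.Perm.sign σ : ℤ) : ℝ) * cosMinus n lam x := by
  unfold cosMinus
  rw [Finset.mul_sum]
  rw [← Equiv.sum_comp (Equiv.mulRight σ) (fun τ : Equiv.Perm (Fin n) =>
    ((Equiv.Perm.sign τ : ℤ) : ℝ) * ∏ i : Fin n, Real.cos (Real.pi * lam (τ i) * (x ∘ σ) i))]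
  refine Finset.sum_congr rfl fun τ _ => ?_
  have hsign : ((Equiv.Perm.sign (Equiv.mulRight σ τ) : ℤ) : ℝ)
      = ((Equiv.Perm.sign σ : ℤ) : ℝ) * ((Equiv.Perm.sign τ : ℤ) : ℝ) := by
    simp [Equiv.Perm.sign_mul, mul_comm]
  have hprod : ∏ i : Fin n, Real.cos (Real.pi * lam ((Equiv.mulRight σ τ) i) * (x ∘ σ) i)
      = ∏ i : Fin n, Real.cos (Real.pi * lam (τ i) * x i) := by
    rw [← Equiv.prod_comp σ (fun j => Real.cos (Real.pi * lam (τ j) * x j))]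
    refine Finset.prod_congr rfl fun i _ => ?_
    simp [Equiv.Perm.mul_apply]
  rw [hsign, hprod]
  ring

/-! ### Measure-zero diagonals -/

lemma diag_null {n : ℕ} (i j : Fin n) (hij : i ≠ j) :
    (volume : Measure (Fin n → ℝ)) {x | x i = x j} = 0 := by
  have hmp :=
    MeasureTheory.volume_preserving_piEquivPiSubtypeProd (fun _ : Fin n => ℝ) (fun l => l = i)
  set e := MeasurableEquiv.piEquivPiSubtypeProd (fun _ : Fin n => ℝ) (fun l => l = i) with he
  set T : Set ((∀ _ : {l : Fin n // l = i}, ℝ) × (∀ _ : {l : Fin n // ¬ l = i}, ℝ)) :=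
    {p | p.1 ⟨i, rfl⟩ = p.2 ⟨j, fun h => hij h.symm⟩} with hT
  have hTmeas : MeasurableSet T := by
    apply measurableSet_eq_fun
    · exact (measurable_pi_apply _).comp measurable_fst
    · exact (measurable_pi_apply _).comp measurable_snd
  have hpre : {x : Fin n → ℝ | x i = x j} = e ⁻¹' T := by
    ext x
    simp [hT, he, MeasurableEquiv.piEquivPiSubtypeProd, Equiv.piEquivPiSubtypeProd]
  rw [hpre, hmp.measure_preimage hTmeas.nullMeasurableSet]
  refine (Measure.measure_prod_null hTmeas).mpr ?_
  refine Filter.Eventually.of_forall fun u => ?_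
  simp only [Pi.zero_apply]
  show (volume : Measure (∀ _ : {l : Fin n // ¬ l = i}, ℝ)) (Prod.mk u ⁻¹' T) = 0
  have hsec : (Prod.mk u ⁻¹' T) = {v : ∀ _ : {l : Fin n // ¬ l = i}, ℝ |
      v ⟨j, fun h => hij h.symm⟩ = u ⟨i, rfl⟩} := by
    ext v; simp [hT, eq_comm]
  rw [hsec]
  exact Measure.pi_hyperplane (fun _ => volume) _ _

/-! ### The fundamental domain -/

lemma isClosed_Fdom (n : ℕ) : IsClosed (Fdom n) := by
  have : Fdom n =
      (⋂ (i : Fin n) (j : Fin n) (_ : i ≤ j), {x : Fin n → ℝ | x j ≤ x i}) ∩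
      ((⋂ i : Fin n, {x : Fin n → ℝ | 0 ≤ x i}) ∩ ⋂ i : Fin n, {x : Fin n → ℝ | x i ≤ 1}) := by
    ext x
    simp only [Fdom, Set.mem_setOf_eq, Set.mem_inter_iff, Set.mem_iInter]
    constructor
    · rintro ⟨h1, h2⟩
      exact ⟨fun i j hij => h1 i j hij, ⟨fun i => (h2 i).1, fun i => (h2 i).2⟩⟩
    · rintro ⟨h1, h2, h3⟩
      exact ⟨fun i j hij => h1 i j hij, fun i => ⟨h2 i, h3 i⟩⟩
  rw [this]
  refine IsClosed.inter ?_ (IsClosed.inter ?_ ?_)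
  · exact isClosed_iInter fun i => isClosed_iInter fun j => isClosed_iInter fun _ =>
      isClosed_le (continuous_apply j) (continuous_apply i)
  · exact isClosed_iInter fun i => isClosed_le continuous_const (continuous_apply i)
  · exact isClosed_iInter fun i => isClosed_le (continuous_apply i) continuous_const

/-! ### Symmetrization -/

lemma symmetrize (n : ℕ) (f : (Fin n → ℝ) → ℝ) (hf : Continuous f)
    (hsymm : ∀ (σ : Equiv.Perm (Fin n)) (x : Fin n → ℝ), f (x ∘ σ) = f x) :
    ∫ x in Set.pi Set.univ (fun _ : Fin n => Set.Icc (0:ℝ) 1), f x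
      = (n.factorial : ℝ) * ∫ x in Fdom n, f x := by
  classical
  set C : Set (Fin n → ℝ) := Set.pi Set.univ (fun _ : Fin n => Set.Icc (0:ℝ) 1) with hC
  set D : Set (Fin n → ℝ) :=
    ⋃ p : Fin n × Fin n, {x : Fin n → ℝ | p.1 ≠ p.2 ∧ x p.1 = x p.2} with hD
  have hDpiece : ∀ p : Fin n × Fin n,
      {x : Fin n → ℝ | p.1 ≠ p.2 ∧ x p.1 = x p.2}
        = if p.1 ≠ p.2 then {x : Fin n → ℝ | x p.1 = x p.2} else ∅ := by
    intro p
    by_cases h : p.1 ≠ p.2 <;> simp [h]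
  have hDnull : (volume : Measure (Fin n → ℝ)) D = 0 := by
    refine measure_iUnion_null fun p => ?_
    rw [hDpiece p]
    by_cases h : p.1 ≠ p.2
    · rw [if_pos h]; exact diag_null p.1 p.2 h
    · rw [if_neg h]; exact measure_empty
  have hDmeas : MeasurableSet D := by
    refine MeasurableSet.iUnion fun p => ?_
    rw [hDpiece p]
    by_cases h : p.1 ≠ p.2
    · rw [if_pos h]
      exact measurableSet_eq_fun (measurable_pi_apply _) (measurable_pi_apply _)
    · rw [if_neg h]; exact MeasurableSet.empty
  set E : Equiv.Perm (Fin n) → Set (Fin n → ℝ) :=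
    fun σ => ((fun x : Fin n → ℝ => x ∘ σ) ⁻¹' Fdom n) \ D with hE
  have hTcont : ∀ σ : Equiv.Perm (Fin n), Continuous (fun x : Fin n → ℝ => x ∘ σ) :=
    fun σ => continuous_pi fun i => continuous_apply (σ i)
  have hEmeas : ∀ σ, MeasurableSet (E σ) := fun σ =>
    ((isClosed_Fdom n).measurableSet.preimage (hTcont σ).measurable).diff hDmeas
  have hinjx : ∀ x : Fin n → ℝ, x ∉ D → Function.Injective x := by
    intro x hx a b hab
    by_contra hne
    exact hx (Set.mem_iUnion.mpr ⟨(a, b), ⟨hne, hab⟩⟩)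
  have hanti : ∀ (x : Fin n → ℝ) (σ : Equiv.Perm (Fin n)),
      x ∈ E σ → StrictAnti (x ∘ σ) := by
    intro x σ hxσ a b hab
    have hFd := hxσ.1
    have hle : x (σ b) ≤ x (σ a) := hFd.1 a b hab.le
    refine lt_of_le_of_ne hle ?_
    intro heq
    exact absurd (σ.injective (hinjx x hxσ.2 heq)) hab.ne'
  have hdisj : Pairwise (Function.onFun Disjoint E) := by
    intro σ τ hne
    rw [Function.onFun, Set.disjoint_left]
    intro x hxσ hxτ
    exact hne (strictAnti_comp_unique (hinjx x hxσ.2) (hanti x σ hxσ) (hanti x τ hxτ))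
  have hEsub : ∀ σ, E σ ⊆ C := by
    intro σ x hx i _
    have h2 := hx.1.2
    have := h2 (σ.symm i)
    simpa using this
  have hcover : C \ D ⊆ ⋃ σ, E σ := by
    intro x hx
    set σ : Equiv.Perm (Fin n) := Fin.revPerm.trans (Tuple.sort x) with hσ
    refine Set.mem_iUnion.mpr ⟨σ, ⟨?_, ?_⟩, hx.2⟩
    · intro i j hij
      have hmono := Tuple.monotone_sort x
      have hrev : Fin.rev j ≤ Fin.rev i := Fin.rev_le_rev.mpr hij
      exact hmono hrev
    · intro i
      have := hx.1 (σ i) (Set.mem_univ _)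
      exact ⟨this.1, this.2⟩
  have hunion : ⋃ σ, E σ = C \ D := by
    refine Set.Subset.antisymm ?_ hcover
    refine Set.iUnion_subset fun σ => ?_
    intro x hx
    exact ⟨hEsub σ hx, hx.2⟩
  have hCcompact : IsCompact C := isCompact_univ_pi fun _ => isCompact_Icc
  have hInt : IntegrableOn f C := hf.continuousOn.integrableOn_compact hCcompact
  have hstep1 : ∫ x in C, f x = ∫ x in C \ D, f x :=
    (setIntegral_congr_set ((diff_ae_eq_self (μ := volume)).mpr
      (measure_mono_null Set.inter_subset_right hDnull))).symm
  have hstep2 : ∫ x in C \ D, f x = ∑ σ : Equiv.Perm (Fin n), ∫ x in E σ, f x := by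
    rw [← hunion, integral_iUnion hEmeas hdisj]
    · exact tsum_fintype _
    · rw [hunion]
      exact hInt.mono_set Set.diff_subset
  have hstep3 : ∀ σ : Equiv.Perm (Fin n), ∫ x in E σ, f x = ∫ x in Fdom n, f x := by
    intro σ
    have h1 : ∫ x in E σ, f x = ∫ x in (fun x : Fin n → ℝ => x ∘ σ) ⁻¹' Fdom n, f x :=
      setIntegral_congr_set ((diff_ae_eq_self (μ := volume)).mpr
        (measure_mono_null Set.inter_subset_right hDnull))
    have hmp := MeasureTheory.volume_measurePreserving_piCongrLeft (fun _ : Fin n => ℝ) σ.symm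
    have happ : ∀ x : Fin n → ℝ,
        (MeasurableEquiv.piCongrLeft (fun _ : Fin n => ℝ) σ.symm) x = x ∘ σ := by
      intro x
      funext i
      rw [MeasurableEquiv.coe_piCongrLeft]
      have h := Equiv.piCongrLeft_apply_apply (fun _ : Fin n => ℝ) σ.symm x (σ i)
      rw [Equiv.symm_apply_apply] at h
      simpa [Function.comp] using h
    have h2 := hmp.setIntegral_preimage_emb
      (MeasurableEquiv.measurableEmbedding _) f (Fdom n)
    have hseteq : (MeasurableEquiv.piCongrLeft (fun _ : Fin n => ℝ) σ.symm) ⁻¹' Fdom n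
        = (fun x : Fin n → ℝ => x ∘ σ) ⁻¹' Fdom n := by
      ext x; simp [Set.mem_preimage, happ x]
    rw [h1, ← hseteq, ← h2]
    refine setIntegral_congr_fun (hseteq ▸
      ((isClosed_Fdom n).measurableSet.preimage (hTcont σ).measurable)) fun x _ => ?_
    rw [happ x, hsymm]
  calc ∫ x in C, f x = ∑ σ : Equiv.Perm (Fin n), ∫ x in E σ, f x := by
        rw [hstep1, hstep2]
    _ = ∑ _σ : Equiv.Perm (Fin n), ∫ x in Fdom n, f x :=
        Finset.sum_congr rfl fun σ _ => hstep3 σ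
    _ = (n.factorial : ℝ) * ∫ x in Fdom n, f x := by
        rw [Finset.sum_const, Finset.card_univ, Fintype.card_perm, Fintype.card_fin,
          nsmul_eq_mul]

/-! ### Factorization over the cube -/

lemma cube_prod_integral {n : ℕ} (g : Fin n → ℝ → ℝ) :
    ∫ x in Set.pi Set.univ (fun _ : Fin n => Set.Icc (0:ℝ) 1), ∏ i, g i (x i)
      = ∏ i, ∫ t in Set.Icc (0:ℝ) 1, g i t := by
  have hmeas : MeasurableSet (Set.pi Set.univ (fun _ : Fin n => Set.Icc (0:ℝ) 1)) :=
    MeasurableSet.univ_pi fun _ => measurableSet_Icc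
  rw [← integral_indicator hmeas]
  have hind : (Set.pi Set.univ (fun _ : Fin n => Set.Icc (0:ℝ) 1)).indicator
        (fun x => ∏ i, g i (x i))
      = fun x => ∏ i, (Set.Icc (0:ℝ) 1).indicator (g i) (x i) := by
    funext x
    by_cases hx : x ∈ Set.pi Set.univ (fun _ : Fin n => Set.Icc (0:ℝ) 1)
    · rw [Set.indicator_of_mem hx]
      exact Finset.prod_congr rfl fun i _ => (Set.indicator_of_mem (hx i trivial) _).symm
    · rw [Set.indicator_of_notMem hx]
      obtain ⟨i, hi⟩ : ∃ i, x i ∉ Set.Icc (0:ℝ) 1 := by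
        by_contra h
        push_neg at h
        exact hx fun i _ => h i
      exact (Finset.prod_eq_zero (Finset.mem_univ i) (Set.indicator_of_notMem hi _)).symm
  rw [hind, MeasureTheory.integral_fintype_prod_volume_eq_prod (ι := Fin n)
    (fun i t => (Set.Icc (0:ℝ) 1).indicator (g i) t)]
  exact Finset.prod_congr rfl fun i _ => by rw [integral_indicator measurableSet_Icc]

end OrthoAux

open OrthoAux

theorem continuous_orthogonality_antisym_halfinteger (n : ℕ) (hn : 1 ≤ n)
    (k k' : Fin n → ℕ)
    (hk : ∀ i j : Fin n, i < j → k j < k i)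
    (hk' : ∀ i j : Fin n, i < j → k' j < k' i) :
    ∫ x in Fdom n,
        cosMinus n (fun i => (k i : ℝ) + 1 / 2) x *
          cosMinus n (fun i => (k' i : ℝ) + 1 / 2) x
      = ((2 : ℝ) ^ n)⁻¹ * (if k = k' then (1 : ℝ) else 0) := by
  classical
  set lam : Fin n → ℝ := fun i => (k i : ℝ) + 1 / 2 with hlam
  set lam' : Fin n → ℝ := fun i => (k' i : ℝ) + 1 / 2 with hlam'
  set f : (Fin n → ℝ) → ℝ := fun x => cosMinus n lam x * cosMinus n lam' x with hfdef
  have hfc : Continuous f := (cosMinus_continuous n lam).mul (cosMinus_continuous n lam')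
  have hsymm : ∀ (σ : Equiv.Perm (Fin n)) (x : Fin n → ℝ), f (x ∘ σ) = f x := by
    intro σ x
    have hs2 : ((Equiv.Perm.sign σ : ℤ) : ℝ) * ((Equiv.Perm.sign σ : ℤ) : ℝ) = 1 := by
      rcases Int.units_eq_one_or (Equiv.Perm.sign σ) with h | h <;> rw [h] <;> norm_num
    simp only [hfdef, cosMinus_perm]
    calc ((Equiv.Perm.sign σ : ℤ) : ℝ) * cosMinus n lam x *
          (((Equiv.Perm.sign σ : ℤ) : ℝ) * cosMinus n lam' x)
        = (((Equiv.Perm.sign σ : ℤ) : ℝ) * ((Equiv.Perm.sign σ : ℤ) : ℝ)) *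
          (cosMinus n lam x * cosMinus n lam' x) := by ring
      _ = cosMinus n lam x * cosMinus n lam' x := by rw [hs2, one_mul]
  have hsymint := symmetrize n f hfc hsymm
  -- expand the integrand over the cube
  have hexp : ∀ x : Fin n → ℝ, f x
      = ∑ p : Equiv.Perm (Fin n) × Equiv.Perm (Fin n),
          (((Equiv.Perm.sign p.1 : ℤ) : ℝ) * ((Equiv.Perm.sign p.2 : ℤ) : ℝ)) *
            ∏ i : Fin n, (Real.cos (π * lam (p.1 i) * x i) * Real.cos (π * lam' (p.2 i) * x i)) := by
    intro x
    simp only [hfdef]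
    unfold cosMinus
    rw [Finset.sum_mul_sum, ← Finset.sum_product']
    rw [show (Finset.univ ×ˢ Finset.univ :
        Finset (Equiv.Perm (Fin n) × Equiv.Perm (Fin n))) = Finset.univ from rfl]
    refine Finset.sum_congr rfl fun p _ => ?_
    rw [Finset.prod_mul_distrib]
    ring
  set C : Set (Fin n → ℝ) := Set.pi Set.univ (fun _ : Fin n => Set.Icc (0:ℝ) 1) with hCdef
  have hCcompact : IsCompact C := isCompact_univ_pi fun _ => isCompact_Icc
  have hterm_cont : ∀ p : Equiv.Perm (Fin n) × Equiv.Perm (Fin n),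
      Continuous (fun x : Fin n → ℝ =>
        (((Equiv.Perm.sign p.1 : ℤ) : ℝ) * ((Equiv.Perm.sign p.2 : ℤ) : ℝ)) *
          ∏ i : Fin n, (Real.cos (π * lam (p.1 i) * x i) * Real.cos (π * lam' (p.2 i) * x i))) := by
    intro p
    refine continuous_const.mul (continuous_finset_prod _ fun i _ => Continuous.mul ?_ ?_)
    · exact Real.continuous_cos.comp (continuous_const.mul (continuous_apply i))
    · exact Real.continuous_cos.comp (continuous_const.mul (continuous_apply i))
  have hcube : ∫ x in C, f x
      = ∑ p : Equiv.Perm (Fin n) × Equiv.Perm (Fin n),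
          (((Equiv.Perm.sign p.1 : ℤ) : ℝ) * ((Equiv.Perm.sign p.2 : ℤ) : ℝ)) *
            ∏ i : Fin n, ∫ t in Set.Icc (0:ℝ) 1,
              Real.cos (π * lam (p.1 i) * t) * Real.cos (π * lam' (p.2 i) * t) := by
    rw [setIntegral_congr_fun (hCcompact.measurableSet) (fun x _ => hexp x)]
    rw [integral_finset_sum _ (fun p _ =>
      ((hterm_cont p).continuousOn.integrableOn_compact hCcompact))]
    refine Finset.sum_congr rfl fun p _ => ?_
    rw [MeasureTheory.integral_const_mul]
    congr 1
    exact cube_prod_integral (fun i t =>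
      Real.cos (π * lam (p.1 i) * t) * Real.cos (π * lam' (p.2 i) * t))
  -- evaluate the 1-dimensional integrals
  have hone : ∀ p : Equiv.Perm (Fin n) × Equiv.Perm (Fin n),
      (∏ i : Fin n, ∫ t in Set.Icc (0:ℝ) 1,
        Real.cos (π * lam (p.1 i) * t) * Real.cos (π * lam' (p.2 i) * t))
      = if (∀ i, k (p.1 i) = k' (p.2 i)) then ((2:ℝ)⁻¹)^n else 0 := by
    intro p
    have hfac : ∀ i : Fin n, (∫ t in Set.Icc (0:ℝ) 1,
        Real.cos (π * lam (p.1 i) * t) * Real.cos (π * lam' (p.2 i) * t))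
        = if k (p.1 i) = k' (p.2 i) then (2:ℝ)⁻¹ else 0 := fun i =>
      oneDim (k (p.1 i)) (k' (p.2 i))
    rw [Finset.prod_congr rfl fun i _ => hfac i]
    by_cases h : ∀ i, k (p.1 i) = k' (p.2 i)
    · rw [if_pos h, Finset.prod_congr rfl fun i _ => if_pos (h i), Finset.prod_const,
        Finset.card_univ, Fintype.card_fin]
    · rw [if_neg h]
      push_neg at h
      obtain ⟨i, hi⟩ := h
      exact Finset.prod_eq_zero (Finset.mem_univ i) (if_neg hi)
  have hkanti : StrictAnti k := fun i j h => hk i j h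
  have hk'anti : StrictAnti k' := fun i j h => hk' i j h
  have hsum : ∑ p : Equiv.Perm (Fin n) × Equiv.Perm (Fin n),
      (((Equiv.Perm.sign p.1 : ℤ) : ℝ) * ((Equiv.Perm.sign p.2 : ℤ) : ℝ)) *
        (if (∀ i, k (p.1 i) = k' (p.2 i)) then ((2:ℝ)⁻¹)^n else 0)
      = if k = k' then (n.factorial : ℝ) * ((2:ℝ)⁻¹)^n else 0 := by
    have hcond : ∀ p : Equiv.Perm (Fin n) × Equiv.Perm (Fin n),
        (∀ i, k (p.1 i) = k' (p.2 i)) ↔ (p.1 = p.2 ∧ k = k') := by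
      intro p
      constructor
      · intro h
        exact sortUnique hkanti hk'anti h
      · rintro ⟨h1, h2⟩ i
        rw [h1, h2]
    by_cases hkk : k = k'
    · rw [if_pos hkk]
      have : ∀ p : Equiv.Perm (Fin n) × Equiv.Perm (Fin n),
          (((Equiv.Perm.sign p.1 : ℤ) : ℝ) * ((Equiv.Perm.sign p.2 : ℤ) : ℝ)) *
            (if (∀ i, k (p.1 i) = k' (p.2 i)) then ((2:ℝ)⁻¹)^n else 0)
          = if p.1 = p.2 then ((2:ℝ)⁻¹)^n else 0 := by
        intro p
        by_cases hp : p.1 = p.2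
        · rw [if_pos hp, if_pos ((hcond p).mpr ⟨hp, hkk⟩)]
          have hs2 : ((Equiv.Perm.sign p.1 : ℤ) : ℝ) * ((Equiv.Perm.sign p.2 : ℤ) : ℝ) = 1 := by
            rw [hp]
            rcases Int.units_eq_one_or (Equiv.Perm.sign p.2) with h | h <;> rw [h] <;> norm_num
          rw [hs2, one_mul]
        · rw [if_neg hp, if_neg (fun hcc => hp ((hcond p).mp hcc).1), mul_zero]
      rw [Finset.sum_congr rfl fun p _ => this p]
      rw [Fintype.sum_prod_type]
      have : ∀ σ : Equiv.Perm (Fin n),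
          (∑ τ : Equiv.Perm (Fin n), if σ = τ then ((2:ℝ)⁻¹)^n else 0) = ((2:ℝ)⁻¹)^n := by
        intro σ
        rw [Finset.sum_ite_eq (Finset.univ) σ (fun _ => ((2:ℝ)⁻¹)^n)]
        rw [if_pos (Finset.mem_univ σ)]
      rw [Finset.sum_congr rfl fun σ _ => this σ, Finset.sum_const, Finset.card_univ,
        Fintype.card_perm, Fintype.card_fin, nsmul_eq_mul]
    · rw [if_neg hkk]
      refine Finset.sum_eq_zero fun p _ => ?_
      rw [if_neg (fun hcc => hkk ((hcond p).mp hcc).2), mul_zero]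
  -- put everything together
  have hmain : (n.factorial : ℝ) * ∫ x in Fdom n, f x
      = if k = k' then (n.factorial : ℝ) * ((2:ℝ)⁻¹)^n else 0 := by
    rw [← hsymint, hcube, ← hsum]
    exact Finset.sum_congr rfl fun p _ => by rw [hone p]
  have hfacne : (n.factorial : ℝ) ≠ 0 := Nat.cast_ne_zero.mpr (Nat.factorial_ne_zero n)
  have hgoal : (n.factorial : ℝ) * (((2 : ℝ) ^ n)⁻¹ * (if k = k' then (1 : ℝ) else 0))
      = if k = k' then (n.factorial : ℝ) * ((2:ℝ)⁻¹)^n else 0 := by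
    by_cases hkk : k = k' <;> simp [hkk, inv_pow] <;> ring
  exact mul_left_cancel₀ hfacne (hmain.trans hgoal.symm)
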